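/- Define on Q the coset-valued function q(r) = (r+λ, r+λ) mod 1 ∈ ℚ/ℤ. Then for a ∈ Δ_L and any r ∈ Q, q(r+a) - q(r) ≡ (a,a) + 2(a,r+λ) ≡ 0 mod 1 but (r+a+λ,r+a+λ) - (r+λ,r+λ) is an odd integer; i.e., the degree shift (1/2)[(a+r+λ,a+r+λ) - (r+λ,r+λ)] lies in ℤ + 1/2 for a ∈ Δ_L, in (1/2)ℤ for a ∈ Δ_S, and in (1/2)ℤ for a ∈ Δ_M. -/

import Mathlib

open Finset

/-- The short root `α_i + α_{i+1} + ... + α_l` of `B_l`, as a coefficient vector. -/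
def sroot (l : ℕ) (i : Fin l) : Fin l → ℤ := fun k => if i ≤ k then 1 else 0

/-- The set `Δ_S` of short roots `±(α_i + ... + α_l)` of `B_l`. -/
def ShortS (l : ℕ) : Set (Fin l → ℤ) := {x | ∃ i, x = sroot l i ∨ x = -sroot l i}

/-- The set `Δ_M` of middle-length roots of `B_l`:
`±((α_i+...+α_l) ± (α_j+...+α_l))` for `i < j`. -/
def MidS (l : ℕ) : Set (Fin l → ℤ) :=
  {x | ∃ i j : Fin l, i < j ∧ (x = sroot l i - sroot l j ∨ x = sroot l j - sroot l i ∨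
      x = sroot l i + sroot l j ∨ x = -(sroot l i + sroot l j))}

/-- The set `Δ_L = {2γ : γ ∈ Δ_S}` of long roots of the folded system. -/
def LongS (l : ℕ) : Set (Fin l → ℤ) := {x | ∃ γ ∈ ShortS l, x = 2 • γ}

/-- The root system `Δ̇` of `B_l`. -/
def RootsB (l : ℕ) : Set (Fin l → ℤ) := ShortS l ∪ MidS l

/-- Gram matrix entries of the normalized `B_l` form:
`(α_i,α_i) = 1` for `i < l`, `(α_l,α_l) = 1/2`, `(α_i,α_j) = -1/2` for `|i-j| = 1`,
and `0` for `|i-j| > 1`. -/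
def gram (l : ℕ) (i j : Fin l) : ℚ :=
  if i = j then (if (i : ℕ) = l - 1 then 1/2 else 1)
  else if ((i : ℤ) - (j : ℤ)).natAbs = 1 then -1/2 else 0

/-- The normalized `B_l` bilinear form on coefficient vectors. -/
def formQ (l : ℕ) (x y : Fin l → ℚ) : ℚ := ∑ i, ∑ j, x i * y j * gram l i j

/-- Coercion of an integer coefficient vector to a rational one. -/
def qc {l : ℕ} (x : Fin l → ℤ) : Fin l → ℚ := fun i => (x i : ℚ)

/-- The weight `λ = Σ_{i=1}^l (i/2) α_i` as a coefficient vector. -/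
def lamQ (l : ℕ) : Fin l → ℚ := fun i => ((i : ℕ) + 1) / 2

/-- The 2-cocycle `ε` with `ε(α_i,α_j) = -1` iff `i = j+1`, extended bimultiplicatively. -/
def epsf (l : ℕ) (a b : Fin l → ℤ) : ℤˣ :=
  ∏ i : Fin l, ∏ j : Fin l, (if (i : ℕ) = (j : ℕ) + 1 then (-1 : ℤˣ) else 1) ^ (a i * b j)

/-- Coefficient-wise reduction mod 2 keeping the sign:
`p₀(Σ k_i α_i) = Σ sgn(k_i)(k_i - 2⌊k_i/2⌋) α_i`. -/
def p0 {l : ℕ} (x : Fin l → ℤ) : Fin l → ℤ :=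
  fun i => (if 0 ≤ x i then 1 else -1) * (x i % 2)

lemma Tsum (l : ℕ) (i j : Fin l) :
    (∑ k, qc (sroot l i) k * gram l k j)
      = (1/2) * ((if (j:ℕ) = (i:ℕ) then 1 else 0) - (if (j:ℕ)+1 = (i:ℕ) then 1 else 0)) := by
  have hterm : ∀ k : Fin l, qc (sroot l i) k * gram l k j =
      (if k = j then (if (i:ℕ) ≤ (j:ℕ) then (if (j:ℕ) = l-1 then (1:ℚ)/2 else 1) else 0) else 0)
      + (if (k:ℕ) = (j:ℕ)+1 then (if (i:ℕ) ≤ (j:ℕ)+1 then (-1:ℚ)/2 else 0) else 0)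
      + (if (k:ℕ)+1 = (j:ℕ) then (if (i:ℕ)+1 ≤ (j:ℕ) then (-1:ℚ)/2 else 0) else 0) := by
    intro k
    simp only [qc, sroot, gram, Fin.le_def, Fin.ext_iff]
    have hk := k.2; have hj := j.2
    split_ifs <;> (try push_cast) <;> first | ring1 | (exfalso; omega) | norm_num
  rw [Finset.sum_congr rfl fun k _ => hterm k]
  rw [Finset.sum_add_distrib, Finset.sum_add_distrib]
  have h1 : (∑ k : Fin l, if k = j then (if (i:ℕ) ≤ (j:ℕ) then (if (j:ℕ) = l-1 then (1:ℚ)/2 else 1) else 0) else 0)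
      = (if (i:ℕ) ≤ (j:ℕ) then (if (j:ℕ) = l-1 then (1:ℚ)/2 else 1) else 0) := by
    rw [Finset.sum_ite_eq' univ j (fun _ => _)]; simp
  have h2 : (∑ k : Fin l, if (k:ℕ) = (j:ℕ)+1 then (if (i:ℕ) ≤ (j:ℕ)+1 then (-1:ℚ)/2 else 0) else 0)
      = if (j:ℕ)+1 < l ∧ (i:ℕ) ≤ (j:ℕ)+1 then (-1:ℚ)/2 else 0 := by
    by_cases hjl : (j:ℕ)+1 < l
    · have : ∀ k : Fin l, ((k:ℕ) = (j:ℕ)+1) = (k = (⟨(j:ℕ)+1, hjl⟩ : Fin l)) := by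
        intro k; simp [Fin.ext_iff]
      simp only [this]
      rw [Finset.sum_ite_eq' univ _ (fun _ => _)]
      simp [hjl]
    · rw [Finset.sum_eq_zero, if_neg (by tauto)]
      intro k _; have := k.2; rw [if_neg]; omega
  have h3 : (∑ k : Fin l, if (k:ℕ)+1 = (j:ℕ) then (if (i:ℕ)+1 ≤ (j:ℕ) then (-1:ℚ)/2 else 0) else 0)
      = if 1 ≤ (j:ℕ) ∧ (i:ℕ)+1 ≤ (j:ℕ) then (-1:ℚ)/2 else 0 := by
    by_cases hj1 : 1 ≤ (j:ℕ)
    · have hlt : (j:ℕ)-1 < l := by have := j.2; omega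
      have : ∀ k : Fin l, ((k:ℕ)+1 = (j:ℕ)) = (k = (⟨(j:ℕ)-1, hlt⟩ : Fin l)) := by
        intro k; simp [Fin.ext_iff]; omega
      simp only [this]
      rw [Finset.sum_ite_eq' univ _ (fun _ => _)]
      simp [hj1]
    · rw [Finset.sum_eq_zero, if_neg (by tauto)]
      intro k _; rw [if_neg]; omega
  rw [h1, h2, h3]
  have hi := i.2; have hj := j.2
  split_ifs <;> (try push_cast) <;> first | ring1 | (exfalso; omega) | norm_num

lemma formQ_sroot (l : ℕ) (i : Fin l) (y : Fin l → ℚ) :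
    formQ l (qc (sroot l i)) y
      = (1/2) * (y i - ∑ k : Fin l, if (k:ℕ)+1 = (i:ℕ) then y k else 0) := by
  unfold formQ
  rw [Finset.sum_comm]
  have step : ∀ j : Fin l, (∑ k, qc (sroot l i) k * y j * gram l k j)
      = (1/2) * ((if (j:ℕ) = (i:ℕ) then y j else 0) - (if (j:ℕ)+1 = (i:ℕ) then y j else 0)) := by
    intro j
    have : (∑ k, qc (sroot l i) k * y j * gram l k j)
        = y j * ∑ k, qc (sroot l i) k * gram l k j := by
      rw [Finset.mul_sum]; exact Finset.sum_congr rfl fun k _ => by ring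
    rw [this, Tsum]
    split_ifs <;> ring
  rw [Finset.sum_congr rfl fun j _ => step j, ← Finset.mul_sum, Finset.sum_sub_distrib]
  congr 2
  have : ∀ j : Fin l, ((j:ℕ) = (i:ℕ)) = (j = i) := fun j => by simp [Fin.ext_iff]
  simp only [this]
  rw [Finset.sum_ite_eq' univ i y]; simp

lemma sum_prev (l : ℕ) (i : Fin l) (y : Fin l → ℚ) :
    (∑ k : Fin l, if (k:ℕ)+1 = (i:ℕ) then y k else 0)
      = if h : 1 ≤ (i:ℕ) then y ⟨(i:ℕ)-1, lt_of_le_of_lt (Nat.sub_le _ _) i.2⟩ else 0 := by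
  split_ifs with hi
  · have hc : ∀ k : Fin l, ((k:ℕ)+1 = (i:ℕ))
        = (k = (⟨(i:ℕ)-1, lt_of_le_of_lt (Nat.sub_le _ _) i.2⟩ : Fin l)) := by
      intro k; simp [Fin.ext_iff]; omega
    simp only [hc]
    rw [Finset.sum_ite_eq' univ _ y]; simp
  · exact Finset.sum_eq_zero fun k _ => if_neg (by omega)

lemma L12 (l : ℕ) (i j : Fin l) :
    formQ l (qc (sroot l i)) (qc (sroot l j)) = if i = j then 1/2 else 0 := by
  rw [formQ_sroot, sum_prev]
  simp only [qc, sroot, Fin.le_def, Fin.ext_iff]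
  have hi := i.2; have hj := j.2
  split_ifs <;> (try push_cast) <;> first | ring1 | (exfalso; omega) | norm_num

lemma L3 (l : ℕ) (i : Fin l) : formQ l (qc (sroot l i)) (lamQ l) = 1/4 := by
  rw [formQ_sroot, sum_prev]
  simp only [lamQ]
  split_ifs with h
  · have : ((((i:ℕ)-1 : ℕ)):ℚ) + 1 = ((i:ℕ):ℚ) := by
      rw [show ((i:ℕ):ℚ) = ((((i:ℕ)-1)+1 : ℕ) : ℚ) from by congr 1; omega]
      push_cast; ring
    rw [this]; ring
  · have : (i:ℕ) = 0 := by omega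
    rw [this]; norm_num

lemma L4 (l : ℕ) (i : Fin l) (r : Fin l → ℤ) :
    ∃ m : ℤ, formQ l (qc (sroot l i)) (qc r) = m/2 := by
  refine ⟨r i - (if h : 1 ≤ (i:ℕ) then r ⟨(i:ℕ)-1, lt_of_le_of_lt (Nat.sub_le _ _) i.2⟩ else 0), ?_⟩
  rw [formQ_sroot, sum_prev]
  simp only [qc]
  split_ifs <;> push_cast <;> ring

lemma gram_comm (l : ℕ) (i j : Fin l) : gram l i j = gram l j i := by
  unfold gram
  rcases eq_or_ne i j with h | h
  · subst h; rfl
  · simp only [h, Ne.symm h, if_false,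
      show ((j:ℤ)-(i:ℤ)).natAbs = ((i:ℤ)-(j:ℤ)).natAbs by omega]

lemma formQ_comm (l : ℕ) (x y : Fin l → ℚ) : formQ l x y = formQ l y x := by
  unfold formQ
  rw [Finset.sum_comm]
  refine Finset.sum_congr rfl fun i _ => Finset.sum_congr rfl fun j _ => ?_
  rw [gram_comm]; ring

lemma formQ_add_left (l : ℕ) (x x' y : Fin l → ℚ) :
    formQ l (x + x') y = formQ l x y + formQ l x' y := by
  simp only [formQ, Pi.add_apply, add_mul, Finset.sum_add_distrib]

lemma formQ_add_right (l : ℕ) (x y y' : Fin l → ℚ) :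
    formQ l x (y + y') = formQ l x y + formQ l x y' := by
  simp only [formQ, Pi.add_apply, mul_add, add_mul, Finset.sum_add_distrib]

lemma formQ_neg_left (l : ℕ) (x y : Fin l → ℚ) :
    formQ l (-x) y = -(formQ l x y) := by
  simp only [formQ, Pi.neg_apply, neg_mul, Finset.sum_neg_distrib]

lemma formQ_neg_right (l : ℕ) (x y : Fin l → ℚ) :
    formQ l x (-y) = -(formQ l x y) := by
  rw [formQ_comm, formQ_neg_left, formQ_comm]

lemma formQ_sub_left (l : ℕ) (x x' y : Fin l → ℚ) :
    formQ l (x - x') y = formQ l x y - formQ l x' y := by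
  rw [sub_eq_add_neg, formQ_add_left, formQ_neg_left]; ring

lemma formQ_sub_right (l : ℕ) (x y y' : Fin l → ℚ) :
    formQ l x (y - y') = formQ l x y - formQ l x y' := by
  rw [sub_eq_add_neg, formQ_add_right, formQ_neg_right]; ring

lemma qc_add {l : ℕ} (a b : Fin l → ℤ) : qc (a + b) = qc a + qc b := by
  funext i; simp [qc]

lemma qc_neg {l : ℕ} (a : Fin l → ℤ) : qc (-a) = -qc a := by
  funext i; simp [qc]

lemma qc_sub {l : ℕ} (a b : Fin l → ℤ) : qc (a - b) = qc a - qc b := by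
  funext i; simp [qc]

lemma qc_two_smul {l : ℕ} (a : Fin l → ℤ) : qc (2 • a) = qc a + qc a := by
  funext i; simp [qc, two_smul]; ring

lemma formQ_expand (l : ℕ) (u w : Fin l → ℚ) :
    formQ l (u + w) (u + w) - formQ l w w = formQ l u u + 2 * formQ l u w := by
  rw [formQ_add_left, formQ_add_right, formQ_add_right, formQ_comm l w u]; ring

lemma expandD (l : ℕ) (a r : Fin l → ℤ) :
    formQ l (qc (a + r) + lamQ l) (qc (a + r) + lamQ l)
        - formQ l (qc r + lamQ l) (qc r + lamQ l)
      = formQ l (qc a) (qc a) + 2 * formQ l (qc a) (qc r + lamQ l) := by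
  have h : qc (a + r) + lamQ l = qc a + (qc r + lamQ l) := by
    rw [qc_add]; abel
  rw [h, formQ_expand]

lemma F_short (l : ℕ) (i : Fin l) (r : Fin l → ℤ) :
    ∃ m : ℤ, formQ l (qc (sroot l i)) (qc r + lamQ l) = m/2 + 1/4 := by
  obtain ⟨m, hm⟩ := L4 l i r
  refine ⟨m, ?_⟩
  have h3 := L3 l i
  revert hm h3
  generalize lamQ l = w
  generalize qc r = u
  intro hm h3
  rw [formQ_add_right, hm, h3]

/-- Degree shifts of vertex operators (Lemma 4.2): writing
`D(a,r) = (a+r+λ, a+r+λ) - (r+λ, r+λ) = (a,a) + 2(a, r+λ)`, for `a ∈ Δ_L` the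
quantity `D(a,r)` is an odd integer (so `D(a,r)/2 ∈ ℤ + 1/2`), while for
`a ∈ Δ_S` and `a ∈ Δ_M` the quantity `D(a,r)/2` lies in `(1/2)ℤ`. -/
theorem degree_shift (l : ℕ) :
    (∀ a ∈ LongS l, ∀ r : Fin l → ℤ,
      formQ l (qc (a + r) + lamQ l) (qc (a + r) + lamQ l)
          - formQ l (qc r + lamQ l) (qc r + lamQ l)
        = formQ l (qc a) (qc a) + 2 * formQ l (qc a) (qc r + lamQ l) ∧
      (∃ m : ℤ, Odd m ∧
        formQ l (qc (a + r) + lamQ l) (qc (a + r) + lamQ l)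
          - formQ l (qc r + lamQ l) (qc r + lamQ l) = m) ∧
      (∃ m : ℤ, (1/2) * (formQ l (qc (a + r) + lamQ l) (qc (a + r) + lamQ l)
          - formQ l (qc r + lamQ l) (qc r + lamQ l)) = m + 1/2)) ∧
    (∀ a ∈ ShortS l, ∀ r : Fin l → ℤ, ∃ m : ℤ,
      (1/2) * (formQ l (qc (a + r) + lamQ l) (qc (a + r) + lamQ l)
          - formQ l (qc r + lamQ l) (qc r + lamQ l)) = (m : ℚ) / 2) ∧
    (∀ a ∈ MidS l, ∀ r : Fin l → ℤ, ∃ m : ℤ,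
      (1/2) * (formQ l (qc (a + r) + lamQ l) (qc (a + r) + lamQ l)
          - formQ l (qc r + lamQ l) (qc r + lamQ l)) = (m : ℚ) / 2) := by
  refine ⟨?_, ?_, ?_⟩
  · rintro a ⟨γ, ⟨i, hγ⟩, rfl⟩ r
    obtain ⟨m, hm⟩ := F_short l i r
    have hss := L12 l i i
    rw [if_pos rfl] at hss
    refine ⟨expandD l _ r, ?_⟩
    rw [expandD l _ r]
    rcases hγ with rfl | rfl
    · rw [qc_two_smul]
      revert hm hss
      generalize qc r + lamQ l = v
      generalize hu : qc (sroot l i) = u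
      intro hm hss
      simp only [formQ_add_left, formQ_add_right, hss, hm]
      exact ⟨⟨2*m+3, ⟨m+1, by ring⟩, by push_cast; ring⟩, ⟨m+1, by push_cast; ring⟩⟩
    · rw [qc_two_smul, qc_neg]
      revert hm hss
      generalize qc r + lamQ l = v
      generalize hu : qc (sroot l i) = u
      intro hm hss
      simp only [formQ_add_left, formQ_add_right, formQ_neg_left, formQ_neg_right, hss, hm]
      exact ⟨⟨1-2*m, ⟨-m, by ring⟩, by push_cast; ring⟩, ⟨-m, by push_cast; ring⟩⟩
  · rintro a ⟨i, hγ⟩ r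
    obtain ⟨m, hm⟩ := F_short l i r
    have hss := L12 l i i
    rw [if_pos rfl] at hss
    rw [expandD l _ r]
    revert hm hss
    generalize qc r + lamQ l = v
    generalize hu : qc (sroot l i) = u
    intro hm hss
    rcases hγ with rfl | rfl
    · rw [hu, hss, hm]
      exact ⟨m+1, by push_cast; ring⟩
    · rw [qc_neg, hu, formQ_neg_left, formQ_neg_right, formQ_neg_left, hss, hm]
      exact ⟨-m, by push_cast; ring⟩
  · rintro a ⟨i, j, hij, hc⟩ r
    obtain ⟨mi, hmi⟩ := F_short l i r
    obtain ⟨mj, hmj⟩ := F_short l j r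
    have hii := L12 l i i
    have hjj := L12 l j j
    have hij1 := L12 l i j
    have hij2 := L12 l j i
    rw [if_pos rfl] at hii hjj
    rw [if_neg (ne_of_lt hij)] at hij1
    rw [if_neg (ne_of_gt hij)] at hij2
    rw [expandD l _ r]
    revert hmi hmj hii hjj hij1 hij2
    generalize qc r + lamQ l = v
    generalize hui : qc (sroot l i) = ui
    generalize huj : qc (sroot l j) = uj
    intro hmi hmj hii hjj hij1 hij2
    have hqs : qc (sroot l i - sroot l j) = ui - uj := by rw [qc_sub, hui, huj]
    have hqs' : qc (sroot l j - sroot l i) = uj - ui := by rw [qc_sub, hui, huj]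
    have hqa : qc (sroot l i + sroot l j) = ui + uj := by rw [qc_add, hui, huj]
    have hqn : qc (-(sroot l i + sroot l j)) = -(ui + uj) := by rw [qc_neg, hqa]
    rcases hc with rfl | rfl | rfl | rfl
    · rw [hqs]
      simp only [formQ_sub_left, formQ_sub_right, hii, hjj, hij1, hij2, hmi, hmj]
      exact ⟨1+mi-mj, by push_cast; ring⟩
    · rw [hqs']
      simp only [formQ_sub_left, formQ_sub_right, hii, hjj, hij1, hij2, hmi, hmj]
      exact ⟨1+mj-mi, by push_cast; ring⟩
    · rw [hqa]
      simp only [formQ_add_left, formQ_add_right, hii, hjj, hij1, hij2, hmi, hmj]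
      exact ⟨2+mi+mj, by push_cast; ring⟩
    · rw [hqn]
      simp only [formQ_neg_left, formQ_neg_right, formQ_add_left, formQ_add_right,
        hii, hjj, hij1, hij2, hmi, hmj]
      exact ⟨-(mi+mj), by push_cast; ring⟩
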